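/- arXiv:1107.5745 — 3 statements merged into one kernel-verified Lean document; each statement's English description precedes it below -/
import Mathlib

section
/- Let C be a category with finite colimits and let P : Cᵒᵖ ⥤ Type be an ind-object of C. Then there exist a small partial order L that is a join-semilattice (any two elements have a least upper bound) in which the strict order relation < is well-founded (equivalently, every strictly descending chain in L is finite), together with a functor E : L ⥤ C (regarding L as a category with a unique morphism x → y whenever x ≤ y), such that P is isomorphic to the colimit of E ⋙ yoneda. In particular, every ind-object of a finitely cocomplete category can be presented by a diagram indexed by such a semilattice (note that a join-semilattice, viewed as a category, is filtered). -/
open CategoryTheory CategoryTheory.Limits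

universe v u

namespace IndPresentAux

variable {J : Type v} [SmallCategory J]

/-- Finite "subgraphs" of `J`: a finite set of objects together with a finite set of
arrows whose endpoints belong to the set of objects. -/
def Subgraph (J : Type v) [SmallCategory J] : Type v :=
  {p : Finset J × Finset (Arrow J) // ∀ f ∈ p.2, f.left ∈ p.1 ∧ f.right ∈ p.1}

noncomputable instance : SemilatticeSup (Subgraph J) := by
  letI : DecidableEq J := Classical.decEq _
  letI : DecidableEq (Arrow J) := Classical.decEq _
  exact Subtype.semilatticeSup (fun x y hx hy => by
    intro f hf
    rcases Finset.mem_union.mp hf with h | h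
    · exact ⟨Finset.mem_union_left _ (hx f h).1, Finset.mem_union_left _ (hx f h).2⟩
    · exact ⟨Finset.mem_union_right _ (hy f h).1, Finset.mem_union_right _ (hy f h).2⟩)

instance : WellFoundedLT (Subgraph J) := by
  constructor
  have h : WellFounded ((· < ·) : Finset J × Finset (Arrow J) → _ → Prop) := wellFounded_lt
  exact Subrelation.wf
    (fun {x y} (hxy : x < y) => show InvImage (· < ·) Subtype.val x y from
      Subtype.coe_lt_coe.mpr hxy)
    (InvImage.wf _ h)

lemma le_def {S S' : Subgraph J} : S ≤ S' ↔ S.1.1 ≤ S'.1.1 ∧ S.1.2 ≤ S'.1.2 := Iff.rfl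

lemma memV_of_le {S S' : Subgraph J} (h : S ≤ S') {v : J} (hv : v ∈ S.1.1) : v ∈ S'.1.1 :=
  (le_def.mp h).1 hv

lemma memA_of_le {S S' : Subgraph J} (h : S ≤ S') {f : Arrow J} (hf : f ∈ S.1.2) :
    f ∈ S'.1.2 :=
  (le_def.mp h).2 hf

section Diagram

variable {C : Type u} [Category.{v} C] [HasFiniteColimits C] (D : J ⥤ C)

/-- The left leg of the coequalizer presentation. -/
noncomputable def lmap (S : Subgraph J) :
    (∐ fun f : {f // f ∈ S.1.2} => D.obj f.1.left) ⟶ (∐ fun v : {v // v ∈ S.1.1} => D.obj v.1) :=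
  Sigma.desc fun f => Sigma.ι (fun v : {v // v ∈ S.1.1} => D.obj v.1) ⟨f.1.left, (S.2 f.1 f.2).1⟩

/-- The right leg of the coequalizer presentation. -/
noncomputable def rmap (S : Subgraph J) :
    (∐ fun f : {f // f ∈ S.1.2} => D.obj f.1.left) ⟶ (∐ fun v : {v // v ∈ S.1.1} => D.obj v.1) :=
  Sigma.desc fun f => D.map f.1.hom ≫
    Sigma.ι (fun v : {v // v ∈ S.1.1} => D.obj v.1) ⟨f.1.right, (S.2 f.1 f.2).2⟩

/-- The colimit of the finite diagram determined by a subgraph. -/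
noncomputable def EObj (S : Subgraph J) : C := coequalizer (lmap D S) (rmap D S)

/-- Structure map into the colimit. -/
noncomputable def EInc (S : Subgraph J) {v : J} (hv : v ∈ S.1.1) : D.obj v ⟶ EObj D S :=
  Sigma.ι (fun v : {v // v ∈ S.1.1} => D.obj v.1) ⟨v, hv⟩ ≫ coequalizer.π _ _

lemma EInc_w (S : Subgraph J) (f : Arrow J) (hf : f ∈ S.1.2) :
    D.map f.hom ≫ EInc D S (S.2 f hf).2 = EInc D S (S.2 f hf).1 := by
  have h : (Sigma.ι (fun f : {f // f ∈ S.1.2} => D.obj f.1.left) ⟨f, hf⟩ ≫ lmap D S) ≫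
        coequalizer.π (lmap D S) (rmap D S) =
      (Sigma.ι (fun f : {f // f ∈ S.1.2} => D.obj f.1.left) ⟨f, hf⟩ ≫ rmap D S) ≫
        coequalizer.π (lmap D S) (rmap D S) := by
    rw [Category.assoc, Category.assoc, coequalizer.condition]
  simpa [lmap, rmap, EInc, EObj, Category.assoc] using h.symm

/-- Maps out of `EObj` from a cocone on the subgraph. -/
noncomputable def EDesc (S : Subgraph J) {X : C} (c : ∀ v ∈ S.1.1, D.obj v ⟶ X)
    (hc : ∀ f (hf : f ∈ S.1.2), D.map f.hom ≫ c f.right (S.2 f hf).2 = c f.left (S.2 f hf).1) :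
    EObj D S ⟶ X :=
  coequalizer.desc (Sigma.desc fun v => c v.1 v.2) (by
    apply Sigma.hom_ext
    rintro ⟨f, hf⟩
    simp only [lmap, rmap, Category.assoc, colimit.ι_desc]
    simpa using (hc f hf).symm)

@[simp] lemma EInc_desc (S : Subgraph J) {X : C} (c : ∀ v ∈ S.1.1, D.obj v ⟶ X)
    (hc : ∀ f (hf : f ∈ S.1.2), D.map f.hom ≫ c f.right (S.2 f hf).2 = c f.left (S.2 f hf).1)
    {v : J} (hv : v ∈ S.1.1) :
    EInc D S hv ≫ EDesc D S c hc = c v hv := by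
  simp only [EInc, EDesc]
  erw [Category.assoc, coequalizer.π_desc]
  simp

lemma EHom_ext (S : Subgraph J) {X : C} {g h : EObj D S ⟶ X}
    (w : ∀ v (hv : v ∈ S.1.1), EInc D S hv ≫ g = EInc D S hv ≫ h) : g = h := by
  apply coequalizer.hom_ext
  apply Sigma.hom_ext
  rintro ⟨v, hv⟩
  have := w v hv
  simp only [EInc] at this
  erw [Category.assoc, Category.assoc] at this
  exact this

/-- Functoriality of `EObj`. -/
noncomputable def EMap {S S' : Subgraph J} (h : S ≤ S') : EObj D S ⟶ EObj D S' :=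
  EDesc D S (fun v hv => EInc D S' (memV_of_le h hv))
    (fun f hf => EInc_w D S' f (memA_of_le h hf))

@[simp] lemma EInc_EMap {S S' : Subgraph J} (h : S ≤ S') {v : J} (hv : v ∈ S.1.1) :
    EInc D S hv ≫ EMap D h = EInc D S' (memV_of_le h hv) :=
  EInc_desc D S _ _ hv

/-- The diagram indexed by the semilattice of subgraphs. -/
noncomputable def EFunc : Subgraph J ⥤ C where
  obj S := EObj D S
  map {S S'} h := EMap D (leOfHom h)
  map_id S := EHom_ext D S (by intro v hv; simp [EMap])
  map_comp {S S' S''} f g := EHom_ext D S (by intro v hv; rw [← Category.assoc]; simp [EMap])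

end Diagram

section Filtered

variable [IsFiltered J]

lemma sup_spec (S : Subgraph J) :
    ∃ (k : J) (T : ∀ v ∈ S.1.1, (v ⟶ k)), ∀ f (hf : f ∈ S.1.2),
      f.hom ≫ T f.right (S.2 f hf).2 = T f.left (S.2 f hf).1 := by
  letI : DecidableEq (Σ' (X Y : J) (_ : X ∈ S.1.1) (_ : Y ∈ S.1.1), X ⟶ Y) := Classical.decEq _
  have h := IsFiltered.sup_exists S.1.1
    (S.1.2.attach.image (fun f =>
      (⟨f.1.left, f.1.right, (S.2 f.1 f.2).1, (S.2 f.1 f.2).2, f.1.hom⟩ :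
        Σ' (X Y : J) (_ : X ∈ S.1.1) (_ : Y ∈ S.1.1), X ⟶ Y)))
  refine ⟨h.choose, fun v hv => h.choose_spec.choose hv,
    fun f hf => h.choose_spec.choose_spec _ _ ?_⟩
  simp only [Finset.mem_image, Finset.mem_attach, true_and]
  exact ⟨⟨f, hf⟩, rfl⟩

/-- A choice of cocone vertex for each subgraph. -/
noncomputable def vtx (S : Subgraph J) : J := (sup_spec S).choose

/-- A choice of cocone legs for each subgraph. -/
noncomputable def toVtx (S : Subgraph J) : ∀ v ∈ S.1.1, (v ⟶ vtx S) :=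
  (sup_spec S).choose_spec.choose

lemma toVtx_w (S : Subgraph J) : ∀ f (hf : f ∈ S.1.2),
    f.hom ≫ toVtx S f.right (S.2 f hf).2 = toVtx S f.left (S.2 f hf).1 :=
  (sup_spec S).choose_spec.choose_spec

lemma exists_coeq {α : Type*} (s : Finset α) (o : α → J) (k : J) :
    ∀ f g : ∀ a ∈ s, o a ⟶ k, ∃ (k' : J) (h : k ⟶ k'),
      ∀ a (ha : a ∈ s), f a ha ≫ h = g a ha ≫ h := by
  classical
  induction s using Finset.induction_on with
  | empty => exact fun f g => ⟨k, 𝟙 k, fun a ha => absurd ha (Finset.notMem_empty a)⟩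
  | @insert a s ha ih =>
    intro f g
    obtain ⟨k', h, hh⟩ := ih (fun b hb => f b (Finset.mem_insert_of_mem hb))
      (fun b hb => g b (Finset.mem_insert_of_mem hb))
    refine ⟨IsFiltered.coeq (f a (Finset.mem_insert_self a s) ≫ h)
        (g a (Finset.mem_insert_self a s) ≫ h),
      h ≫ IsFiltered.coeqHom _ _, ?_⟩
    intro b hb
    rcases Finset.mem_insert.mp hb with rfl | hb'
    · have := IsFiltered.coeq_condition (f b (Finset.mem_insert_self b s) ≫ h)
        (g b (Finset.mem_insert_self b s) ≫ h)
      simpa [Category.assoc] using this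
    · rw [← Category.assoc, ← Category.assoc]
      exact congrArg (· ≫ IsFiltered.coeqHom _ _) (hh b hb')

/-- The subgraph with a single object and no arrows. -/
def single (j : J) : Subgraph J := ⟨({j}, ∅), by simp⟩

omit [IsFiltered J] in
lemma mem_single (j : J) : j ∈ (single j).1.1 := Finset.mem_singleton_self j

/-- The subgraph spanned by a single arrow. -/
noncomputable def pair {j j' : J} (f : j ⟶ j') : Subgraph J := by
  classical
  exact ⟨({j, j'}, {Arrow.mk f}), by
    intro g hg
    rw [Finset.mem_singleton] at hg
    subst hg
    exact ⟨by simp, by simp⟩⟩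

omit [IsFiltered J] in
lemma single_src_le_pair {j j' : J} (f : j ⟶ j') : single j ≤ pair f := by
  classical
  refine le_def.mpr ⟨?_, Finset.empty_subset _⟩
  simp only [single, pair]
  exact Finset.singleton_subset_iff.mpr (by simp)

omit [IsFiltered J] in
lemma single_tgt_le_pair {j j' : J} (f : j ⟶ j') : single j' ≤ pair f := by
  classical
  refine le_def.mpr ⟨?_, Finset.empty_subset _⟩
  simp only [single, pair]
  exact Finset.singleton_subset_iff.mpr (by simp)

omit [IsFiltered J] in
lemma arrow_mem_pair {j j' : J} (f : j ⟶ j') : Arrow.mk f ∈ (pair f).1.2 := by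
  classical
  simp [pair]

/-- The enlargement of a subgraph by its chosen cocone. -/
noncomputable def enlarge (S : Subgraph J) : Subgraph J := by
  classical
  exact ⟨(insert (vtx S) S.1.1,
      S.1.2 ∪ S.1.1.attach.image fun v => Arrow.mk (toVtx S v.1 v.2)), by
    intro f hf
    rcases Finset.mem_union.mp hf with hf | hf
    · exact ⟨Finset.mem_insert_of_mem (S.2 f hf).1, Finset.mem_insert_of_mem (S.2 f hf).2⟩
    · obtain ⟨v, -, rfl⟩ := Finset.mem_image.mp hf
      exact ⟨Finset.mem_insert_of_mem v.2, Finset.mem_insert_self _ _⟩⟩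

lemma le_enlarge (S : Subgraph J) : S ≤ enlarge S := by
  classical
  exact le_def.mpr ⟨by simp [enlarge, Finset.subset_insert], by simp [enlarge]⟩

lemma single_vtx_le_enlarge (S : Subgraph J) : single (vtx S) ≤ enlarge S := by
  classical
  refine le_def.mpr ⟨?_, Finset.empty_subset _⟩
  simp only [single, enlarge]
  exact Finset.singleton_subset_iff.mpr (Finset.mem_insert_self _ _)

lemma mem_enlarge {S : Subgraph J} {v : J} (hv : v ∈ S.1.1) : v ∈ (enlarge S).1.1 :=
  memV_of_le (le_enlarge S) hv

lemma arrow_mem_enlarge (S : Subgraph J) {v : J} (hv : v ∈ S.1.1) :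
    Arrow.mk (toVtx S v hv) ∈ (enlarge S).1.2 := by
  classical
  exact Finset.mem_union_right _ (Finset.mem_image.mpr ⟨⟨v, hv⟩, Finset.mem_attach _ _, rfl⟩)

end Filtered

section Iso

variable {C : Type u} [Category.{v} C]

/-- Two maps into objects of a diagram which are identified further along give equal
composites into the colimit of the associated diagram of presheaves. -/
lemma glue {K : Type v} [SmallCategory K] (G : K ⥤ C) {X : C} {j j' k : K}
    (a : j ⟶ k) (b : j' ⟶ k) (u : X ⟶ G.obj j) (w : X ⟶ G.obj j')
    (huv : u ≫ G.map a = w ≫ G.map b) :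
    yoneda.map u ≫ colimit.ι (G ⋙ yoneda) j = yoneda.map w ≫ colimit.ι (G ⋙ yoneda) j' := by
  rw [← colimit.w (G ⋙ yoneda) a, ← colimit.w (G ⋙ yoneda) b, ← Category.assoc,
    ← Category.assoc]
  congr 1
  show yoneda.map u ≫ yoneda.map (G.map a) = yoneda.map w ≫ yoneda.map (G.map b)
  rw [← yoneda.map_comp, ← yoneda.map_comp, huv]

variable [HasFiniteColimits C] [IsFiltered J] (D : J ⥤ C)

@[simp] lemma EInc_psi_aux (S : Subgraph J) {v : J} (hv : v ∈ S.1.1) :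
    EInc D S hv ≫ EDesc D S (fun v hv => D.map (toVtx S v hv))
      (fun f hf => by rw [← D.map_comp, toVtx_w S f hf]) = D.map (toVtx S v hv) :=
  EInc_desc D S _ _ hv

/-- The comparison map from the chosen cocone. -/
noncomputable def psi (S : Subgraph J) : EObj D S ⟶ D.obj (vtx S) :=
  EDesc D S (fun v hv => D.map (toVtx S v hv))
    (fun f hf => by rw [← D.map_comp, toVtx_w S f hf])

@[simp] lemma EInc_psi (S : Subgraph J) {v : J} (hv : v ∈ S.1.1) :
    EInc D S hv ≫ psi D S = D.map (toVtx S v hv) :=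
  EInc_desc D S _ _ hv

/-- The forward comparison morphism. -/
noncomputable def phi : colimit (D ⋙ yoneda) ⟶ colimit (EFunc D ⋙ yoneda) :=
  colimit.desc (D ⋙ yoneda)
    { pt := colimit (EFunc D ⋙ yoneda)
      ι :=
        { app := fun j => yoneda.map (EInc D (single j) (mem_single j)) ≫
            colimit.ι (EFunc D ⋙ yoneda) (single j)
          naturality := by
            intro j j' f
            dsimp only [Functor.comp_map, Functor.const_obj_map, Functor.const_obj_obj]
            erw [Category.comp_id, ← Category.assoc, ← yoneda.map_comp]
            refine glue (EFunc D) (homOfLE (single_tgt_le_pair f))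
              (homOfLE (single_src_le_pair f)) _ _ ?_
            show (D.map f ≫ EInc D (single j') (mem_single j')) ≫
                EMap D (single_tgt_le_pair f) =
              EInc D (single j) (mem_single j) ≫ EMap D (single_src_le_pair f)
            rw [Category.assoc, EInc_EMap, EInc_EMap]
            exact EInc_w D (pair f) (Arrow.mk f) (arrow_mem_pair f) } }

/-- The backward comparison morphism. -/
noncomputable def psiHom : colimit (EFunc D ⋙ yoneda) ⟶ colimit (D ⋙ yoneda) :=
  colimit.desc (EFunc D ⋙ yoneda)
    { pt := colimit (D ⋙ yoneda)
      ι :=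
        { app := fun S => yoneda.map (psi D S) ≫ colimit.ι (D ⋙ yoneda) (vtx S)
          naturality := by
            intro S S' h
            dsimp only [Functor.comp_map, Functor.const_obj_map, Functor.const_obj_obj]
            erw [Category.comp_id, ← Category.assoc, ← yoneda.map_comp]
            obtain ⟨k, hmerge, hw⟩ := exists_coeq S.1.1 id (IsFiltered.max (vtx S') (vtx S))
              (fun v hv => toVtx S' v (memV_of_le (leOfHom h) hv) ≫ IsFiltered.leftToMax _ _)
              (fun v hv => toVtx S v hv ≫ IsFiltered.rightToMax _ _)
            refine glue D (IsFiltered.leftToMax _ _ ≫ hmerge)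
              (IsFiltered.rightToMax _ _ ≫ hmerge) _ _ ?_
            show ((EFunc D).map h ≫ psi D S') ≫ D.map (IsFiltered.leftToMax _ _ ≫ hmerge) =
              psi D S ≫ D.map (IsFiltered.rightToMax _ _ ≫ hmerge)
            apply EHom_ext
            intro v hv
            show EInc D S hv ≫ (EMap D (leOfHom h) ≫ psi D S') ≫ _ =
              EInc D S hv ≫ psi D S ≫ _
            simp only [← Category.assoc, EInc_EMap, EInc_psi, ← D.map_comp]
            exact congrArg D.map (hw v hv) } }

/-- The presentation of the original colimit by the semilattice of subgraphs. -/
noncomputable def presIso : colimit (D ⋙ yoneda) ≅ colimit (EFunc D ⋙ yoneda) where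
  hom := phi D
  inv := psiHom D
  hom_inv_id := by
    apply colimit.hom_ext
    intro j
    rw [← Category.assoc]
    show (colimit.ι (D ⋙ yoneda) j ≫ phi D) ≫ psiHom D = _
    rw [phi, colimit.ι_desc]
    dsimp only
    erw [Category.assoc, psiHom, colimit.ι_desc]
    dsimp only
    erw [← Category.assoc, ← yoneda.map_comp, EInc_psi, Category.comp_id]
    exact colimit.w (D ⋙ yoneda) (toVtx (single j) j (mem_single j))
  inv_hom_id := by
    apply colimit.hom_ext
    intro S
    rw [← Category.assoc, psiHom, colimit.ι_desc]
    dsimp only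
    rw [Category.assoc, phi, colimit.ι_desc]
    dsimp only
    erw [← Category.assoc, ← yoneda.map_comp, Category.comp_id]
    have key : (psi D S ≫ EInc D (single (vtx S)) (mem_single (vtx S))) ≫
          EMap D (single_vtx_le_enlarge S) =
        𝟙 (EObj D S) ≫ EMap D (le_enlarge S) := by
      rw [Category.id_comp, Category.assoc, EInc_EMap]
      apply EHom_ext
      intro v hv
      rw [← Category.assoc, EInc_psi, EInc_EMap]
      exact EInc_w D (enlarge S) (Arrow.mk (toVtx S v hv)) (arrow_mem_enlarge S hv)
    have hg := glue (EFunc D) (homOfLE (single_vtx_le_enlarge S)) (homOfLE (le_enlarge S))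
      (psi D S ≫ EInc D (single (vtx S)) (mem_single (vtx S))) (𝟙 (EObj D S)) key
    erw [yoneda.map_id, Category.id_comp] at hg
    exact hg

end Iso

end IndPresentAux

/-- Every ind-object of a category with finite colimits can be presented
by a diagram indexed by a small join-semilattice whose strict order is well-founded
(equivalently, in which every strictly descending chain is finite). -/
theorem indObject_presented_by_wellFounded_semilattice
    {C : Type u} [Category.{v} C] [HasFiniteColimits C]
    (P : Cᵒᵖ ⥤ Type v)
    (hP : ∃ (J : Type v) (_ : SmallCategory J) (_ : IsFiltered J) (D : J ⥤ C),
      Nonempty (P ≅ colimit (D ⋙ yoneda))) :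
    ∃ (L : Type v) (_ : SemilatticeSup L) (_ : WellFoundedLT L) (E : L ⥤ C),
      Nonempty (P ≅ colimit (E ⋙ yoneda)) := by
  obtain ⟨J, _, _, D, ⟨e⟩⟩ := hP
  exact ⟨IndPresentAux.Subgraph J, inferInstance, inferInstance, IndPresentAux.EFunc D,
    ⟨e ≪≫ IndPresentAux.presIso D⟩⟩
end

section
/- Let C be a small monoidal category and let P, Q : Cᵒᵖ ⥤ Type be presheaves that are ind-objects of C. Then the Day convolution P ⊛ Q (the presheaf given by the coend (P ⊛ Q)(c) = ∫^{(a,b) ∈ C×C} P(a) × Q(b) × Hom_C(c, a ⊗ b); equivalently, the value at (P,Q) of the left Kan extension of (a,b) ↦ yoneda(a ⊗ b) along yoneda × yoneda) is again an ind-object of C. More precisely, if P ≅ colim_{i∈I} yoneda(X(i)) and Q ≅ colim_{j∈J} yoneda(Y(j)) with I and J small filtered categories, then P ⊛ Q ≅ colim_{(i,j)∈I×J} yoneda(X(i) ⊗ Y(j)), and I × J is filtered. -/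
open CategoryTheory CategoryTheory.Limits MonoidalCategory

universe v

variable {C : Type v} [SmallCategory C] [MonoidalCategory C]

section Aux

variable {A : Type v} [SmallCategory A] {B : Type v} [SmallCategory B]
  {D : Type u₂} [Category.{v} D] {D' : Type u₃} [Category.{v} D']

theorem prodFinalAux [IsFilteredOrEmpty A] [IsFilteredOrEmpty B]
    (F : A ⥤ D) (G : B ⥤ D') [F.Final] [G.Final] : (F.prod G).Final := by
  rw [Functor.final_iff_of_isFiltered]
  constructor
  · rintro ⟨d₁, d₂⟩
    haveI : IsConnected (StructuredArrow d₁ F) := Functor.Final.out d₁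
    haveI : IsConnected (StructuredArrow d₂ G) := Functor.Final.out d₂
    obtain ⟨s₁⟩ : Nonempty (StructuredArrow d₁ F) := IsConnected.is_nonempty
    obtain ⟨s₂⟩ : Nonempty (StructuredArrow d₂ G) := IsConnected.is_nonempty
    exact ⟨(s₁.right, s₂.right), ⟨(s₁.hom, s₂.hom)⟩⟩
  · rintro ⟨d₁, d₂⟩ ⟨c₁, c₂⟩ ⟨s₁, s₂⟩ ⟨s₁', s₂'⟩
    obtain ⟨e₁, t₁, ht₁⟩ := Functor.Final.exists_coeq F s₁ s₁'
    obtain ⟨e₂, t₂, ht₂⟩ := Functor.Final.exists_coeq G s₂ s₂'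
    exact ⟨(e₁, e₂), (t₁, t₂), Prod.ext ht₁ ht₂⟩

def prodToCostructuredArrow (F : A ⥤ D) (G : B ⥤ D') (P : D) (Q : D') :
    CostructuredArrow F P × CostructuredArrow G Q ⥤ CostructuredArrow (F.prod G) (P, Q) where
  obj x := CostructuredArrow.mk
    (Y := (x.1.left, x.2.left)) ((x.1.hom, x.2.hom) : (F.prod G).obj (x.1.left, x.2.left) ⟶ (P, Q))
  map f := CostructuredArrow.homMk (f.1.left, f.2.left)
    (Prod.ext (CostructuredArrow.w f.1) (CostructuredArrow.w f.2))
  map_id x := by apply CostructuredArrow.hom_ext; rfl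
  map_comp f g := by apply CostructuredArrow.hom_ext; rfl

def prodCostructuredArrowInv (F : A ⥤ D) (G : B ⥤ D') (P : D) (Q : D') :
    CostructuredArrow (F.prod G) (P, Q) ⥤ CostructuredArrow F P × CostructuredArrow G Q where
  obj z := (CostructuredArrow.mk z.hom.1, CostructuredArrow.mk z.hom.2)
  map f := (CostructuredArrow.homMk f.left.1 (congrArg Prod.fst (CostructuredArrow.w f)),
    CostructuredArrow.homMk f.left.2 (congrArg Prod.snd (CostructuredArrow.w f)))
  map_id z := by
    refine Prod.ext ?_ ?_ <;> apply CostructuredArrow.hom_ext <;> rfl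
  map_comp f g := by
    refine Prod.ext ?_ ?_ <;> apply CostructuredArrow.hom_ext <;> rfl

def costructuredArrowProdEquiv (F : A ⥤ D) (G : B ⥤ D') (P : D) (Q : D') :
    CostructuredArrow F P × CostructuredArrow G Q ≌ CostructuredArrow (F.prod G) (P, Q) where
  functor := prodToCostructuredArrow F G P Q
  inverse := prodCostructuredArrowInv F G P Q
  unitIso := NatIso.ofComponents (fun x => Iso.refl _) (fun f => by
    refine Prod.ext ?_ ?_ <;> apply CostructuredArrow.hom_ext <;>
      simp [prodToCostructuredArrow, prodCostructuredArrowInv])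
  counitIso := NatIso.ofComponents (fun z => Iso.refl _) (fun f => by
    apply CostructuredArrow.hom_ext
    simp [prodToCostructuredArrow, prodCostructuredArrowInv])
  functor_unitIso_comp := fun x => by
    apply CostructuredArrow.hom_ext
    simp [prodToCostructuredArrow, prodCostructuredArrowInv]

end Aux

/-- The Day convolution `P ⊛ Q` of two presheaves on a small monoidal category `C`:
the value at `(P, Q)` of the (pointwise) left Kan extension of the functor
`(a, b) ↦ yoneda (a ⊗ b)` along `yoneda × yoneda`; equivalently, the presheaf given by
the coend `(P ⊛ Q)(c) = ∫^{(a,b)} P(a) × Q(b) × Hom_C(c, a ⊗ b)`. -/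
noncomputable def dayConvolution (P Q : Cᵒᵖ ⥤ Type v) : Cᵒᵖ ⥤ Type v :=
  colimit (CostructuredArrow.proj (yoneda.prod yoneda) (P, Q) ⋙
    (MonoidalCategory.tensor C ⋙ yoneda))

/-- The Day convolution of two ind-objects of a small monoidal category is
again an ind-object: if `P ≅ colim_I yoneda (X i)` and `Q ≅ colim_J yoneda (Y j)` with `I`,
`J` small and filtered, then `I × J` is filtered,
`P ⊛ Q ≅ colim_{(i,j) ∈ I × J} yoneda (X i ⊗ Y j)`, and in particular `P ⊛ Q` is an
ind-object of `C`. -/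
theorem dayConvolution_isIndObject
    (P Q : Cᵒᵖ ⥤ Type v)
    (I : Type v) [SmallCategory I] [IsFiltered I] (X : I ⥤ C)
    (hP : P ≅ colimit (X ⋙ yoneda))
    (J : Type v) [SmallCategory J] [IsFiltered J] (Y : J ⥤ C)
    (hQ : Q ≅ colimit (Y ⋙ yoneda)) :
    IsFiltered (I × J) ∧
    Nonempty (dayConvolution P Q ≅
      colimit ((X.prod Y ⋙ MonoidalCategory.tensor C) ⋙ yoneda)) ∧
    ∃ (K : Type v) (_ : SmallCategory K) (_ : IsFiltered K) (D : K ⥤ C),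
      Nonempty (dayConvolution P Q ≅ colimit (D ⋙ yoneda)) := by
  let cP : Cocone (X ⋙ yoneda) := (colimit.cocone (X ⋙ yoneda)).extend hP.inv
  have hcP : IsColimit cP := (colimit.isColimit _).extendIso hP.inv
  let cQ : Cocone (Y ⋙ yoneda) := (colimit.cocone (Y ⋙ yoneda)).extend hQ.inv
  have hcQ : IsColimit cQ := (colimit.isColimit _).extendIso hQ.inv
  let tP : I ⥤ CostructuredArrow yoneda P :=
    cP.toCostructuredArrow ⋙ CostructuredArrow.pre X yoneda P
  haveI : tP.Final := Presheaf.final_toCostructuredArrow_comp_pre X hcP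
  let tQ : J ⥤ CostructuredArrow yoneda Q :=
    cQ.toCostructuredArrow ⋙ CostructuredArrow.pre Y yoneda Q
  haveI : tQ.Final := Presheaf.final_toCostructuredArrow_comp_pre Y hcQ
  haveI : (tP.prod tQ).Final := prodFinalAux tP tQ
  let Φ : I × J ⥤ CostructuredArrow (yoneda.prod yoneda) ((P, Q) : (Cᵒᵖ ⥤ Type v) × (Cᵒᵖ ⥤ Type v)) :=
    (tP.prod tQ) ⋙ (costructuredArrowProdEquiv yoneda yoneda P Q).functor
  haveI : Φ.Final := Functor.final_comp _ _
  let e1 : dayConvolution P Q ≅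
      colimit (Φ ⋙ (CostructuredArrow.proj (yoneda.prod yoneda) (P, Q) ⋙
        (MonoidalCategory.tensor C ⋙ yoneda))) :=
    (Functor.Final.colimitIso Φ _).symm
  let e2 : Φ ⋙ CostructuredArrow.proj (yoneda.prod yoneda) (P, Q) ≅ X.prod Y := Iso.refl _
  let e3 : dayConvolution P Q ≅ colimit ((X.prod Y ⋙ MonoidalCategory.tensor C) ⋙ yoneda) :=
    e1 ≪≫ HasColimit.isoOfNatIso (Functor.isoWhiskerRight e2 (MonoidalCategory.tensor C ⋙ yoneda))
  exact ⟨inferInstance, ⟨e3⟩, ⟨I × J, inferInstance, inferInstance,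
    X.prod Y ⋙ MonoidalCategory.tensor C, ⟨e3⟩⟩⟩
end

section
/- Let l be a commutative ring and let A be a nontrivial commutative ring with no zero divisors (an integral domain). For i ∈ l let δ_i : l → A denote the family with (δ_i)_j = 1 if j = i and (δ_i)_j = 0 otherwise. Then every complete orthogonal idempotent l-family in A equals δ_{i₀} for a unique i₀ ∈ l; hence the map i ↦ δ_i is a bijection from l onto the set of complete orthogonal idempotent l-families in A. Moreover this bijection transports the ring structure of l to the convolution operations: δ_i ∗₊ δ_{i'} = δ_{i+i'} and δ_i ∗× δ_{i'} = δ_{i·i'}, where (a ∗₊ b)_m = ∑_{i+j=m} a_i b_j and (a ∗× b)_m = ∑_{i·j=m} a_i b_j. -/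
/-- A complete orthogonal idempotent `l`-family in a commutative ring `A`: a finitely
supported function `a : l → A` with `∑ᵢ aᵢ = 1` and `aᵢ · aⱼ = 0` for `i ≠ j`. -/
def IsCompleteOrthogonalIdempotentFamily {l A : Type*} [CommRing A] (a : l → A) : Prop :=
  (Function.support a).Finite ∧ (∑ᶠ i, a i) = 1 ∧ ∀ i j, i ≠ j → a i * a j = 0

/-- The family `δ_i`, with `(δ_i)_j = 1` if `j = i` and `0` otherwise. -/
def deltaFamily (l A : Type*) [DecidableEq l] [Zero A] [One A] (i : l) : l → A :=
  fun j => if j = i then 1 else 0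

lemma deltaFamily_self {l A : Type*} [DecidableEq l] [Zero A] [One A] (i : l) :
    deltaFamily l A i i = 1 := by simp [deltaFamily]

lemma deltaFamily_ne {l A : Type*} [DecidableEq l] [Zero A] [One A] {i j : l} (h : j ≠ i) :
    deltaFamily l A i j = 0 := by simp [deltaFamily, h]

lemma conv_delta {l A : Type*} [DecidableEq l] [CommRing A] (f : l → l → l) (i i' m : l) :
    (∑ᶠ (x : l) (y : l) (_ : f x y = m),
        deltaFamily l A i x * deltaFamily l A i' y) = deltaFamily l A (f i i') m := by
  rw [finsum_eq_single _ i]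
  · rw [finsum_eq_single _ i']
    · rw [deltaFamily_self, deltaFamily_self, mul_one, finsum_eq_if]
      by_cases h : f i i' = m
      · simp [h, deltaFamily_self]
      · simp [h]; exact (deltaFamily_ne (by exact fun hm => h hm.symm)).symm
    · intro y hy
      simp [deltaFamily_ne hy]
  · intro x hx
    simp [deltaFamily_ne hx]

/-- If `A` is an integral domain, then every complete orthogonal
idempotent `l`-family in `A` is `δ_{i₀}` for a unique `i₀ ∈ l`; hence `i ↦ δ_i` is a
bijection from `l` onto the set of complete orthogonal idempotent `l`-families in `A`, and
this bijection transports the ring structure of `l` to the additive and multiplicative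
convolutions: `δ_i ∗₊ δ_{i'} = δ_{i+i'}` and `δ_i ∗× δ_{i'} = δ_{i·i'}`. -/
theorem completeOrthogonalIdempotentFamily_domain
    {l A : Type*} [CommRing l] [DecidableEq l] [CommRing A] [IsDomain A] :
    (∀ a : l → A, IsCompleteOrthogonalIdempotentFamily a →
        ∃! i₀ : l, a = deltaFamily l A i₀) ∧
    (∀ i : l, IsCompleteOrthogonalIdempotentFamily (deltaFamily l A i)) ∧
    Function.Injective (deltaFamily l A) ∧
    (∀ i i' : l,
      (fun m : l => ∑ᶠ (x : l) (y : l) (_ : x + y = m),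
          deltaFamily l A i x * deltaFamily l A i' y) = deltaFamily l A (i + i')) ∧
    (∀ i i' : l,
      (fun m : l => ∑ᶠ (x : l) (y : l) (_ : x * y = m),
          deltaFamily l A i x * deltaFamily l A i' y) = deltaFamily l A (i * i')) := by
  have hdelta : ∀ i : l, IsCompleteOrthogonalIdempotentFamily (deltaFamily l A i) := by
    intro i
    refine ⟨Set.Finite.subset (Set.finite_singleton i) ?_, ?_, ?_⟩
    · intro x hx
      by_contra hxi
      exact hx (deltaFamily_ne hxi)
    · rw [finsum_eq_single _ i (fun x hx => deltaFamily_ne hx), deltaFamily_self]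
    · intro x y hxy
      rcases eq_or_ne x i with rfl | hx
      · rw [deltaFamily_ne (Ne.symm hxy), mul_zero]
      · rw [deltaFamily_ne hx, zero_mul]
  refine ⟨?_, hdelta, ?_, fun i i' => funext fun m => conv_delta _ i i' m,
    fun i i' => funext fun m => conv_delta _ i i' m⟩
  · intro a ⟨hfin, hsum, horth⟩
    obtain ⟨i₀, hi₀⟩ : ∃ i₀, a i₀ ≠ 0 := by
      by_contra h
      push_neg at h
      rw [finsum_eq_zero_of_forall_eq_zero h] at hsum
      exact zero_ne_one hsum
    have hone : a i₀ = 1 := by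
      have : a i₀ * (∑ᶠ j, a j) = a i₀ * a i₀ := by
        rw [mul_finsum]
        exact finsum_eq_single _ i₀ (fun j hj => horth i₀ j (Ne.symm hj))
      rw [hsum, mul_one] at this
      exact (mul_left_cancel₀ hi₀ ((mul_one (a i₀)).trans this)).symm
    have ha : a = deltaFamily l A i₀ := by
      funext j
      rcases eq_or_ne j i₀ with rfl | hj
      · rw [deltaFamily_self, hone]
      · rw [deltaFamily_ne hj]
        have := horth i₀ j (Ne.symm hj)
        rw [hone, one_mul] at this
        exact this
    refine ⟨i₀, ha, fun j hj => ?_⟩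
    have : deltaFamily l A j i₀ = 1 := by rw [← hj, hone]
    by_contra hji
    rw [deltaFamily_ne (Ne.symm hji)] at this
    exact zero_ne_one this
  · intro i j hij
    have := congrFun hij i
    rw [deltaFamily_self] at this
    by_contra h
    rw [deltaFamily_ne (fun e => h e)] at this
    exact one_ne_zero this
end
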